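/- Let T be an infinite locally finite tree equipped with an end-orientation σ, let A be a finite set of vertices of T, and let k, r ≥ 1 be integers with k ≤ |A|. Then the number of vertices of T that are (k,r)-supported for A with respect to σ is at most r(2|A| − k)/k. -/
import Mathlib


variable {V : Type*}

/-- An end-orientation of an infinite locally finite tree `T`: a map `σ` from the vertex set to
itself such that (i) `σ v` is adjacent to `v`; (ii) `σ^[n] v ≠ v` for every `n ≥ 1`; and
(iii) any two vertices have a common iterated image. -/
def IsEndOrientation (G : SimpleGraph V) (σ : V → V) : Prop :=
  (∀ v, G.Adj v (σ v)) ∧ (∀ v, ∀ n : ℕ, 1 ≤ n → σ^[n] v ≠ v) ∧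
    (∀ u v, ∃ m n : ℕ, σ^[m] u = σ^[n] v)

/-- `u` is a descendant of `v` (with respect to the end-orientation `σ`). -/
def IsDescendant (σ : V → V) (u v : V) : Prop := ∃ j : ℕ, σ^[j] u = v

/-- `A_v`: the set of elements of `A \ {v}` that are descendants of `v`. -/
def DescSet (σ : V → V) (A : Set V) (v : V) : Set V :=
  {a | a ∈ A ∧ a ≠ v ∧ IsDescendant σ a v}

/-- `u` is `(k,r)`-supported for `A` (with respect to `σ`): there is at least one `w` with
`σ^[r] w = u`, and `|A_u| - |A_w| ≥ k` for every such `w`. -/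
def IsSupported (σ : V → V) (A : Set V) (k r : ℕ) (u : V) : Prop :=
  (∃ w, σ^[r] w = u) ∧
    ∀ w, σ^[r] w = u →
      (k : ℤ) ≤ ((DescSet σ A u).ncard : ℤ) - ((DescSet σ A w).ncard : ℤ)

/- ----------------- Auxiliary development ----------------- -/

lemma desc_trans (σ : V → V) {u v w : V} (h1 : IsDescendant σ u v) (h2 : IsDescendant σ v w) :
    IsDescendant σ u w := by
  obtain ⟨i, hi⟩ := h1
  obtain ⟨j, hj⟩ := h2
  exact ⟨j + i, by rw [Function.iterate_add_apply, hi, hj]⟩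

lemma desc_antisymm (σ : V → V) (hnp : ∀ v : V, ∀ n : ℕ, 1 ≤ n → σ^[n] v ≠ v)
    {u v : V} (h1 : IsDescendant σ u v) (h2 : IsDescendant σ v u) : u = v := by
  obtain ⟨i, hi⟩ := h1
  obtain ⟨j, hj⟩ := h2
  rcases Nat.eq_zero_or_pos (i + j) with h | h
  · have hi0 : i = 0 := by omega
    simpa [hi0] using hi
  · exact absurd (by rw [Function.iterate_add_apply, hj, hi] : σ^[i + j] v = v)
      (hnp v (i + j) h)

lemma desc_comparable (σ : V → V) {x u v : V} (h1 : IsDescendant σ x u)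
    (h2 : IsDescendant σ x v) : IsDescendant σ u v ∨ IsDescendant σ v u := by
  obtain ⟨i, hi⟩ := h1
  obtain ⟨j, hj⟩ := h2
  rcases le_total i j with h | h
  · left
    exact ⟨j - i, by rw [← hi, ← Function.iterate_add_apply, Nat.sub_add_cancel h, hj]⟩
  · right
    exact ⟨i - j, by rw [← hj, ← Function.iterate_add_apply, Nat.sub_add_cancel h, hi]⟩

open Classical in
/-- The set of maximal elements of `T` with respect to the descendant order. -/
noncomputable def Mx (σ : V → V) (T : Finset V) : Finset V :=
  T.filter (fun u => ∀ v ∈ T, u ≠ v → ¬ IsDescendant σ u v)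

lemma mem_Mx {σ : V → V} {T : Finset V} {u : V} :
    u ∈ Mx σ T ↔ u ∈ T ∧ ∀ v ∈ T, u ≠ v → ¬ IsDescendant σ u v := by
  classical
  simp [Mx]

lemma sum_card_le {B : V → Finset V} {C W : Finset V}
    (hdisj : ∀ u ∈ C, ∀ v ∈ C, u ≠ v → Disjoint (B u) (B v))
    (hsub : ∀ u ∈ C, B u ⊆ W) :
    ∑ u ∈ C, (B u).card ≤ W.card := by
  classical
  rw [← Finset.card_biUnion hdisj]
  exact Finset.card_le_card (Finset.biUnion_subset.mpr hsub)

/-- The core counting lemma: in a finite set `T` in which every element carries at least `k`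
mass, comparable distinct pairs have mass gap at least `k`, and incomparable elements have
disjoint mass sets, we have `k * (|T| + #max elements) ≤ 2 * (total mass of maximal elements)`. -/
theorem core_bound (σ : V → V) (hnp : ∀ v : V, ∀ n : ℕ, 1 ≤ n → σ^[n] v ≠ v)
    (B : V → Finset V) (k : ℕ) (hk : 1 ≤ k)
    (hmono : ∀ u v : V, IsDescendant σ u v → B u ⊆ B v)
    (hdisj : ∀ u v : V, ¬IsDescendant σ u v → ¬IsDescendant σ v u → Disjoint (B u) (B v)) :
    ∀ (n : ℕ) (T : Finset V), T.card ≤ n →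
      (∀ u ∈ T, k ≤ (B u).card) →
      (∀ u ∈ T, ∀ v ∈ T, u ≠ v → IsDescendant σ u v → (B u).card + k ≤ (B v).card) →
      k * (T.card + (Mx σ T).card) ≤ 2 * ∑ ρ ∈ Mx σ T, (B ρ).card := by
  intro n
  induction n with
  | zero =>
    intro T hT _ _
    have hTe : T = ∅ := Finset.card_eq_zero.mp (Nat.le_zero.mp hT)
    subst hTe
    simp [Mx]
  | succ n ih =>
    intro T hT h1 h2
    rcases T.eq_empty_or_nonempty with rfl | hne
    · simp [Mx]
    classical
    obtain ⟨ρ0, hρ0T, hρ0max⟩ := T.exists_max_image (fun u => (B u).card) hne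
    have hρ0nd : ∀ v ∈ T, ρ0 ≠ v → ¬ IsDescendant σ ρ0 v := by
      intro v hv hnev hd
      have hb := h2 ρ0 hρ0T v hv hnev hd
      have hb2 := hρ0max v hv
      omega
    have hρ0Mx : ρ0 ∈ Mx σ T := mem_Mx.mpr ⟨hρ0T, hρ0nd⟩
    set T' := T.erase ρ0 with hT'
    set D := T.filter (fun w => w ≠ ρ0 ∧ IsDescendant σ w ρ0) with hD
    have hDT' : D ⊆ T' := by
      intro w hw
      have hw' := Finset.mem_filter.mp hw
      exact Finset.mem_erase.mpr ⟨hw'.2.1, hw'.1⟩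
    -- the maximal elements of T' are those of T (minus ρ0) together with those of D
    have hMx' : Mx σ T' = ((Mx σ T).erase ρ0) ∪ Mx σ D := by
      ext u
      simp only [Finset.mem_union, Finset.mem_erase, mem_Mx]
      constructor
      · rintro ⟨huT', humax⟩
        have huT : u ∈ T := Finset.mem_of_mem_erase huT'
        have hune : u ≠ ρ0 := (Finset.mem_erase.mp huT').1
        by_cases hud : IsDescendant σ u ρ0
        · right
          refine ⟨Finset.mem_filter.mpr ⟨huT, hune, hud⟩, ?_⟩
          intro v hv hnev hd
          exact humax v (hDT' hv) hnev hd
        · left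
          refine ⟨hune, huT, ?_⟩
          intro v hv hnev hd
          rcases eq_or_ne v ρ0 with rfl | hvne
          · exact hud hd
          · exact humax v (Finset.mem_erase.mpr ⟨hvne, hv⟩) hnev hd
      · rintro (⟨hune, huT, humax⟩ | ⟨huD, humax⟩)
        · refine ⟨Finset.mem_erase.mpr ⟨hune, huT⟩, ?_⟩
          intro v hv hnev hd
          exact humax v (Finset.mem_of_mem_erase hv) hnev hd
        · have h' := Finset.mem_filter.mp huD
          refine ⟨hDT' huD, ?_⟩
          intro v hv hnev hd
          have hvT : v ∈ T := Finset.mem_of_mem_erase hv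
          have hvne : v ≠ ρ0 := (Finset.mem_erase.mp hv).1
          rcases desc_comparable σ hd h'.2.2 with hc | hc
          · exact humax v (Finset.mem_filter.mpr ⟨hvT, hvne, hc⟩) hnev hd
          · exact hρ0nd v hvT hvne.symm hc
    have hdisjU : Disjoint ((Mx σ T).erase ρ0) (Mx σ D) := by
      rw [Finset.disjoint_left]
      intro u hu huD
      have h1u := mem_Mx.mp (Finset.mem_of_mem_erase hu)
      have h2u := Finset.mem_filter.mp (mem_Mx.mp huD).1
      exact h1u.2 ρ0 hρ0T h2u.2.1 h2u.2.2
    have hcard' : T'.card + 1 = T.card := Finset.card_erase_add_one hρ0T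
    have hMxcard : (Mx σ T').card + 1 = (Mx σ T).card + (Mx σ D).card := by
      rw [hMx', Finset.card_union_of_disjoint hdisjU]
      have h := Finset.card_erase_add_one hρ0Mx
      omega
    have hMxsum : (∑ ρ ∈ Mx σ T', (B ρ).card) + (B ρ0).card
        = (∑ ρ ∈ Mx σ T, (B ρ).card) + ∑ ρ ∈ Mx σ D, (B ρ).card := by
      have h : (∑ x ∈ (Mx σ T).erase ρ0, (B x).card) + (B ρ0).card
          = ∑ ρ ∈ Mx σ T, (B ρ).card := Finset.sum_erase_add _ _ hρ0Mx
      rw [hMx', Finset.sum_union hdisjU]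
      omega
    have ihT' := ih T' (by omega)
      (fun u hu => h1 u (Finset.mem_of_mem_erase hu))
      (fun u hu v hv => h2 u (Finset.mem_of_mem_erase hu) v (Finset.mem_of_mem_erase hv))
    -- key local inequality
    have hkey : 2 * (∑ ρ ∈ Mx σ D, (B ρ).card) + 2 * k
        ≤ 2 * (B ρ0).card + k * (Mx σ D).card := by
      have hsumD : ∑ ρ ∈ Mx σ D, (B ρ).card ≤ (B ρ0).card := by
        apply sum_card_le
        · intro u hu v hv hnev
          have hu' := mem_Mx.mp hu
          have hv' := mem_Mx.mp hv
          exact hdisj u v (hu'.2 v hv'.1 hnev) (hv'.2 u hu'.1 hnev.symm)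
        · intro u hu
          exact hmono u ρ0 (Finset.mem_filter.mp (mem_Mx.mp hu).1).2.2
      rcases Nat.lt_or_ge (Mx σ D).card 1 with hc0 | hc1
      · have hMe : Mx σ D = ∅ := Finset.card_eq_zero.mp (by omega)
        rw [hMe]
        simp only [Finset.sum_empty, Finset.card_empty, Nat.mul_zero, Nat.add_zero]
        have hb := h1 ρ0 hρ0T
        omega
      rcases Nat.lt_or_ge (Mx σ D).card 2 with hc1' | hc2
      · have h1c : (Mx σ D).card = 1 := by omega
        obtain ⟨c0, hc0⟩ := Finset.card_eq_one.mp h1c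
        have hc0D : c0 ∈ Mx σ D := by rw [hc0]; exact Finset.mem_singleton_self c0
        have hc0p := Finset.mem_filter.mp (mem_Mx.mp hc0D).1
        have hb := h2 c0 hc0p.1 ρ0 hρ0T hc0p.2.1 hc0p.2.2
        rw [hc0]
        simp only [Finset.sum_singleton, Finset.card_singleton, Nat.mul_one]
        omega
      · calc 2 * (∑ ρ ∈ Mx σ D, (B ρ).card) + 2 * k
            = 2 * (∑ ρ ∈ Mx σ D, (B ρ).card) + k * 2 := by ring
          _ ≤ 2 * (B ρ0).card + k * (Mx σ D).card :=
            Nat.add_le_add (Nat.mul_le_mul_left 2 hsumD) (Nat.mul_le_mul_left k hc2)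
    -- assemble
    have e1 : k * (T.card + (Mx σ T).card) + k * (Mx σ D).card
        = k * (T'.card + (Mx σ T').card) + 2 * k := by
      have e0 : T.card + (Mx σ T).card + (Mx σ D).card
          = T'.card + (Mx σ T').card + 2 := by omega
      calc k * (T.card + (Mx σ T).card) + k * (Mx σ D).card
          = k * (T.card + (Mx σ T).card + (Mx σ D).card) := by ring
        _ = k * (T'.card + (Mx σ T').card + 2) := by rw [e0]
        _ = k * (T'.card + (Mx σ T').card) + 2 * k := by ring
    obtain ⟨kc, hkc⟩ : ∃ x, k * (Mx σ D).card = x := ⟨_, rfl⟩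
    rw [hkc] at hkey
    have e2 : k * (T'.card + (Mx σ T').card) + 2 * k
        ≤ 2 * (∑ ρ ∈ Mx σ T, (B ρ).card) + kc := by
      have h2s : 2 * (∑ ρ ∈ Mx σ T', (B ρ).card) + 2 * k
          ≤ 2 * (∑ ρ ∈ Mx σ T, (B ρ).card) + kc := by omega
      exact le_trans (Nat.add_le_add_right ihT' _) h2s
    have e3 : k * (T.card + (Mx σ T).card) + kc
        ≤ 2 * (∑ ρ ∈ Mx σ T, (B ρ).card) + kc := by
      rw [← hkc, e1, hkc]
      exact e2
    exact Nat.le_of_add_le_add_right e3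

/-- In an infinite locally finite tree with an end-orientation `σ`, for a finite set `A` of
vertices and `k, r ≥ 1` with `k ≤ |A|`, there are at most `r (2|A| - k)/k` vertices that are
`(k,r)`-supported for `A`. -/
theorem supported_count (G : SimpleGraph V) (hT : G.IsTree) (hlf : G.LocallyFinite)
    (hinf : Infinite V) (σ : V → V) (hσ : IsEndOrientation G σ)
    (A : Set V) (hA : A.Finite) (k r : ℕ) (hk : 1 ≤ k) (hr : 1 ≤ r) (hkA : k ≤ A.ncard) :
    ∀ S : Finset V, (∀ u ∈ S, IsSupported σ A k r u) →
      (S.card : ℝ) ≤ r * (2 * A.ncard - k) / k := by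
  classical
  obtain ⟨-, hnp, hdir⟩ := hσ
  intro S hS
  haveI := hinf
  set A0 : Finset V := hA.toFinset with hA0
  set B : V → Finset V := fun u => A0.filter (fun a => a ≠ u ∧ IsDescendant σ a u) with hB
  have hBA : ∀ u, B u ⊆ A0 := fun u => Finset.filter_subset _ _
  have hAn : A.ncard = A0.card := by
    rw [← Set.ncard_coe_finset A0, hA0, hA.coe_toFinset]
  have hset : ∀ u, DescSet σ A u = ↑(B u) := by
    intro u
    ext a
    simp only [DescSet, Set.mem_setOf_eq, hB, Finset.coe_filter, hA0,
      Set.Finite.mem_toFinset]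
  have hg : ∀ u, (DescSet σ A u).ncard = (B u).card := by
    intro u
    rw [hset u, Set.ncard_coe_finset]
  have hmono : ∀ u v : V, IsDescendant σ u v → B u ⊆ B v := by
    intro u v huv a ha
    simp only [hB, Finset.mem_filter] at ha ⊢
    obtain ⟨haA, hne, hd⟩ := ha
    refine ⟨haA, ?_, desc_trans σ hd huv⟩
    rintro rfl
    exact hne (desc_antisymm σ hnp huv hd).symm
  have hdisjB : ∀ u v : V, ¬IsDescendant σ u v → ¬IsDescendant σ v u →
      Disjoint (B u) (B v) := by
    intro u v h1 h2
    rw [Finset.disjoint_left]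
    intro a hau hav
    simp only [hB, Finset.mem_filter] at hau hav
    rcases desc_comparable σ hau.2.2 hav.2.2 with h | h
    exacts [h1 h, h2 h]
  have h1 : ∀ u ∈ S, k ≤ (B u).card := by
    intro u hu
    obtain ⟨⟨w, hw⟩, hbd⟩ := hS u hu
    have hb := hbd w hw
    rw [hg u, hg w] at hb
    omega
  -- common ancestor of S
  have hzex : ∀ s : Finset V, ∃ z : V, ∀ u ∈ s, ∃ n : ℕ, σ^[n] u = z := by
    intro s
    induction s using Finset.induction_on with
    | empty => exact ⟨Classical.arbitrary V, by simp⟩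
    | @insert a s _ ih =>
      obtain ⟨z, hzs⟩ := ih
      obtain ⟨m, n, hmn⟩ := hdir a z
      refine ⟨σ^[n] z, ?_⟩
      intro u hu
      rcases Finset.mem_insert.mp hu with rfl | hu
      · exact ⟨m, hmn⟩
      · obtain ⟨j, hj⟩ := hzs u hu
        exact ⟨n + j, by rw [Function.iterate_add_apply, hj]⟩
  obtain ⟨z, hz⟩ := hzex S
  set d : V → ℕ := fun u => if h : ∃ n : ℕ, σ^[n] u = z then Nat.find h else 0 with hd
  have hdspec : ∀ u ∈ S, σ^[d u] u = z := by
    intro u hu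
    have h := hz u hu
    simp only [hd, dif_pos h]
    exact Nat.find_spec h
  have huniq : ∀ (u : V) (m n1 : ℕ), σ^[m] u = z → σ^[n1] u = z → m = n1 := by
    intro u m n1 hm hn
    rcases Nat.lt_trichotomy m n1 with h | h | h
    · exfalso
      have hzz : σ^[n1 - m] z = z := by
        rw [← hm, ← Function.iterate_add_apply, Nat.sub_add_cancel h.le, hn, hm]
      exact hnp z (n1 - m) (by omega) hzz
    · exact h
    · exfalso
      have hzz : σ^[m - n1] z = z := by
        rw [← hn, ← Function.iterate_add_apply, Nat.sub_add_cancel h.le, hm, hn]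
      exact hnp z (m - n1) (by omega) hzz
  -- the gap estimate inside a residue class
  have hgap : ∀ u ∈ S, ∀ v ∈ S, d u % r = d v % r → u ≠ v → IsDescendant σ u v →
      (B u).card + k ≤ (B v).card := by
    intro u hu v hv hmod hne hdesc
    obtain ⟨j, hj⟩ := hdesc
    have hj0 : j ≠ 0 := by
      rintro rfl
      exact hne (by simpa using hj)
    have hdu : d u = d v + j := by
      refine huniq u (d u) (d v + j) (hdspec u hu) ?_
      rw [Function.iterate_add_apply, hj]
      exact hdspec v hv
    have hdvd : r ∣ j := by
      have hmm : d v ≡ d u [MOD r] := hmod.symm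
      have hdd := (Nat.modEq_iff_dvd' (by omega : d v ≤ d u)).mp hmm
      rwa [hdu, Nat.add_sub_cancel_left] at hdd
    have hjr : r ≤ j := Nat.le_of_dvd (Nat.pos_of_ne_zero hj0) hdvd
    have hwv : σ^[r] (σ^[j - r] u) = v := by
      rw [← Function.iterate_add_apply]
      have hrj : r + (j - r) = j := by omega
      rw [hrj]
      exact hj
    have hb := (hS v hv).2 (σ^[j - r] u) hwv
    rw [hg v, hg (σ^[j - r] u)] at hb
    have hcard : (B u).card ≤ (B (σ^[j - r] u)).card :=
      Finset.card_le_card (hmono u (σ^[j - r] u) ⟨j - r, rfl⟩)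
    omega
  have hkA0 : k ≤ A0.card := by rw [← hAn]; exact hkA
  -- per-bucket bound
  have hbucket : ∀ c : ℕ, k * (S.filter (fun u => d u % r = c)).card + k ≤ 2 * A0.card := by
    intro c
    set T := S.filter (fun u => d u % r = c) with hTdef
    have hTS : T ⊆ S := Finset.filter_subset _ _
    have h1' : ∀ u ∈ T, k ≤ (B u).card := fun u hu => h1 u (hTS hu)
    have h2' : ∀ u ∈ T, ∀ v ∈ T, u ≠ v → IsDescendant σ u v →
        (B u).card + k ≤ (B v).card := by
      intro u hu v hv
      have hu' := Finset.mem_filter.mp hu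
      have hv' := Finset.mem_filter.mp hv
      exact hgap u hu'.1 v hv'.1 (hu'.2.trans hv'.2.symm)
    rcases T.eq_empty_or_nonempty with hTe | hTne
    · rw [hTe]
      simp only [Finset.card_empty, Nat.mul_zero, Nat.zero_add]
      omega
    · obtain ⟨ρ0, hρ0, hρ0m⟩ := T.exists_max_image (fun u => (B u).card) hTne
      have hρ0Mx : ρ0 ∈ Mx σ T := by
        refine mem_Mx.mpr ⟨hρ0, ?_⟩
        intro v hv hnev hdv
        have hb := h2' ρ0 hρ0 v hv hnev hdv
        have hb2 := hρ0m v hv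
        omega
      have hcore := core_bound σ hnp B k hk hmono hdisjB T.card T le_rfl h1' h2'
      have hsum : ∑ ρ ∈ Mx σ T, (B ρ).card ≤ A0.card := by
        apply sum_card_le
        · intro u hu v hv hnev
          have hu' := mem_Mx.mp hu
          have hv' := mem_Mx.mp hv
          exact hdisjB u v (hu'.2 v hv'.1 hnev) (hv'.2 u hu'.1 hnev.symm)
        · intro u _
          exact hBA u
      have hM1 : 1 ≤ (Mx σ T).card := Finset.card_pos.mpr ⟨ρ0, hρ0Mx⟩
      calc k * T.card + k = k * (T.card + 1) := by ring
        _ ≤ k * (T.card + (Mx σ T).card) := Nat.mul_le_mul_left k (by omega)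
        _ ≤ 2 * ∑ ρ ∈ Mx σ T, (B ρ).card := hcore
        _ ≤ 2 * A0.card := Nat.mul_le_mul_left 2 hsum
  -- sum over buckets
  have hfib : S.card = ∑ c ∈ Finset.range r, (S.filter (fun u => d u % r = c)).card := by
    apply Finset.card_eq_sum_card_fiberwise
    intro u _
    exact Finset.mem_range.mpr (Nat.mod_lt _ (by omega))
  have htot : k * S.card + k * r ≤ r * (2 * A0.card) := by
    have hsum_eq : ∑ c ∈ Finset.range r, (k * (S.filter (fun u => d u % r = c)).card + k)
        = k * S.card + k * r := by
      rw [Finset.sum_add_distrib, ← Finset.mul_sum, ← hfib, Finset.sum_const,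
        Finset.card_range, smul_eq_mul, mul_comm r k]
    calc k * S.card + k * r
        = ∑ c ∈ Finset.range r, (k * (S.filter (fun u => d u % r = c)).card + k) :=
          hsum_eq.symm
      _ ≤ ∑ c ∈ Finset.range r, 2 * A0.card := Finset.sum_le_sum fun c _ => hbucket c
      _ = r * (2 * A0.card) := by rw [Finset.sum_const, Finset.card_range, smul_eq_mul]
  -- conclude over the reals
  have hk0 : (0 : ℝ) < (k : ℝ) := by exact_mod_cast hk
  rw [le_div_iff₀ hk0]
  have htot' : k * S.card + k * r ≤ r * (2 * A.ncard) := by rw [hAn]; exact htot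
  have hcast : (k : ℝ) * S.card + k * r ≤ r * (2 * A.ncard) := by exact_mod_cast htot'
  nlinarith [hcast]
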